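/- Let F : D₁ → D₂ be a triangle functor between triangulated categories, and let (U₁, …, U_n) and (V₁, …, V_n) be n-gons of recollements in D₁ and D₂ respectively, such that F(U_k) ⊆ V_k for all k. If n is odd and F restricted to U_t is a triangle equivalence for some t, then F is a triangle equivalence. If n is even and F restricted to both U_t and U_{t+1} are triangle equivalences for some t, then F is a triangle equivalence. -/

import Mathlib

open CategoryTheory Limits Pretriangulated

universe v₁ v₂ u₁ u₂

namespace PaperIKM

variable (C : Type u₁) [Category.{v₁} C] [HasZeroObject C] [HasShift C ℤ] [Preadditive C]
  [∀ n : ℤ, (shiftFunctor C n).Additive] [Pretriangulated C]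

/-- A stable t-structure in a pretriangulated category. -/
structure IsStableTStructure (U V : Set C) : Prop where
  shift_memU : ∀ (n : ℤ) (X : C), X ∈ U → (shiftFunctor C n).obj X ∈ U
  shift_memV : ∀ (n : ℤ) (X : C), X ∈ V → (shiftFunctor C n).obj X ∈ V
  hom_zero : ∀ ⦃X Y : C⦄, X ∈ U → Y ∈ V → ∀ f : X ⟶ Y, f = 0
  exists_triangle : ∀ X : C, ∃ (A B : C) (_ : A ∈ U) (_ : B ∈ V)
    (f : A ⟶ X) (g : X ⟶ B) (h : B ⟶ A⟦(1 : ℤ)⟧),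
      Triangle.mk f g h ∈ distTriang C

variable {C}
variable {D : Type u₂} [Category.{v₂} D] [HasZeroObject D] [HasShift D ℤ] [Preadditive D]
  [∀ n : ℤ, (shiftFunctor D n).Additive] [Pretriangulated D]

/-- `F` restricts to a triangle equivalence between the full subcategories determined by
`U` and `V` : fully faithful on `U` and essentially surjective from `U` onto `V`. -/
def RestrictsToEquivalence (F : C ⥤ D) (U : Set C) (V : Set D) : Prop :=
  (∀ (X Y : C), X ∈ U → Y ∈ U → Function.Bijective (fun f : X ⟶ Y => F.map f)) ∧
  (∀ Z ∈ V, ∃ X ∈ U, Nonempty (F.obj X ≅ Z))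

lemma bij_comp_cancel {α β γ : Sort*} {f : α → β} {g : β → γ} (hg : Function.Bijective g)
    (hfg : Function.Bijective (g ∘ f)) : Function.Bijective f :=
  (Function.Bijective.of_comp_iff' hg f).mp hfg

lemma bij_comp_cancel' {α β γ : Sort*} {f : α → β} {g : γ → α} (hg : Function.Bijective g)
    (hfg : Function.Bijective (f ∘ g)) : Function.Bijective f :=
  (Function.Bijective.of_comp_iff f hg).mp hfg

lemma precomp_bij (T : Triangle C) (hT : T ∈ distTriang C) (Y : C)
    (h0 : ∀ f : T.obj₃ ⟶ Y, f = 0) (h1 : ∀ f : T.obj₃⟦(-1:ℤ)⟧ ⟶ Y, f = 0) :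
    Function.Bijective (fun g : T.obj₂ ⟶ Y => T.mor₁ ≫ g) := by
  constructor
  · intro f g hfg
    simp only at hfg
    have h : T.mor₁ ≫ (f - g) = 0 := by rw [Preadditive.comp_sub, hfg, sub_self]
    obtain ⟨h', hh⟩ := Triangle.yoneda_exact₂ T hT (f - g) h
    rw [h0 h', comp_zero] at hh
    exact sub_eq_zero.mp hh
  · intro f
    have hv : (T.invRotate).mor₁ ≫ f = 0 := h1 _
    obtain ⟨g, hg⟩ := Triangle.yoneda_exact₂ _ (inv_rot_of_distTriang T hT) f hv
    exact ⟨g, hg.symm⟩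

lemma postcomp_bij (T : Triangle C) (hT : T ∈ distTriang C) (X : C)
    (h0 : ∀ f : X ⟶ T.obj₃, f = 0) (h1 : ∀ f : X ⟶ T.obj₃⟦(-1:ℤ)⟧, f = 0) :
    Function.Bijective (fun g : X ⟶ T.obj₁ => g ≫ T.mor₁) := by
  constructor
  · intro f g hfg
    simp only at hfg
    have h : (f - g) ≫ (T.invRotate).mor₂ = 0 := by
      erw [Preadditive.sub_comp]
      erw [show (T.invRotate).mor₂ = T.mor₁ from rfl, hfg, sub_self]
    obtain ⟨h', hh⟩ := Triangle.coyoneda_exact₂ _ (inv_rot_of_distTriang T hT) (f - g) h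
    erw [h1 h', zero_comp] at hh
    exact sub_eq_zero.mp hh
  · intro f
    have h : f ≫ T.mor₂ = 0 := h0 _
    obtain ⟨g, hg⟩ := Triangle.coyoneda_exact₂ T hT f h
    exact ⟨g, hg.symm⟩

/-- If `F` is bijective on homs between objects of `U0`, it is bijective on homs from an
object of `U0` to an arbitrary object. -/
lemma mixed_bij (F : C ⥤ D) [F.CommShift ℤ] [F.IsTriangulated]
    {U0 U1 : Set C} {V0 V1 : Set D}
    (hU : IsStableTStructure C U0 U1) (hV : IsStableTStructure D V0 V1)
    (hF0 : ∀ X ∈ U0, F.obj X ∈ V0) (hF1 : ∀ X ∈ U1, F.obj X ∈ V1)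
    (bij0 : ∀ X Y : C, X ∈ U0 → Y ∈ U0 → Function.Bijective (fun f : X ⟶ Y => F.map f))
    {A : C} (hA : A ∈ U0) (Y : C) :
    Function.Bijective (fun f : A ⟶ Y => F.map f) := by
  obtain ⟨A', B', hA', hB', a', b', c', hT⟩ := hU.exists_triangle Y
  have postC : Function.Bijective (fun g : A ⟶ A' => g ≫ a') :=
    postcomp_bij (Triangle.mk a' b' c') hT A (fun f => hU.hom_zero hA hB' f)
      (fun f => hU.hom_zero hA (hU.shift_memV (-1) _ hB') f)
  have hT' := F.map_distinguished _ hT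
  have postD : Function.Bijective (fun g : F.obj A ⟶ F.obj A' => g ≫ F.map a') :=
    postcomp_bij (F.mapTriangle.obj (Triangle.mk a' b' c')) hT' (F.obj A)
      (fun f => hV.hom_zero (hF0 _ hA) (hF1 _ hB') f)
      (fun f => hV.hom_zero (hF0 _ hA) (hV.shift_memV (-1) _ (hF1 _ hB')) f)
  have hbij : Function.Bijective
      ((fun f : A ⟶ Y => F.map f) ∘ (fun g : A ⟶ A' => g ≫ a')) := by
    have he : ((fun f : A ⟶ Y => F.map f) ∘ (fun g : A ⟶ A' => g ≫ a'))
        = (fun g : F.obj A ⟶ F.obj A' => g ≫ F.map a') ∘ (fun g : A ⟶ A' => F.map g) := by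
      funext g; simp
    rw [he]
    exact postD.comp (bij0 _ _ hA hA')
  exact bij_comp_cancel' postC hbij


/-- If `F` is bijective on homs on three consecutive pieces (two consecutive stable
t-structures), then it is bijective on all homs. -/
lemma global_bij (F : C ⥤ D) [F.CommShift ℤ] [F.IsTriangulated]
    {U0 U1 U2 : Set C} {V0 V1 V2 : Set D}
    (hU01 : IsStableTStructure C U0 U1) (hU12 : IsStableTStructure C U1 U2)
    (hV01 : IsStableTStructure D V0 V1) (hV12 : IsStableTStructure D V1 V2)
    (hF0 : ∀ X ∈ U0, F.obj X ∈ V0) (hF1 : ∀ X ∈ U1, F.obj X ∈ V1)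
    (hF2 : ∀ X ∈ U2, F.obj X ∈ V2)
    (bij0 : ∀ X Y : C, X ∈ U0 → Y ∈ U0 → Function.Bijective (fun f : X ⟶ Y => F.map f))
    (bij1 : ∀ X Y : C, X ∈ U1 → Y ∈ U1 → Function.Bijective (fun f : X ⟶ Y => F.map f)) :
    ∀ X Y : C, Function.Bijective (fun f : X ⟶ Y => F.map f) := by
  have mix0 : ∀ (A : C), A ∈ U0 → ∀ Z : C, Function.Bijective (fun f : A ⟶ Z => F.map f) :=
    fun A hA Z => mixed_bij F hU01 hV01 hF0 hF1 bij0 hA Z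
  have mix1 : ∀ (B : C), B ∈ U1 → ∀ Z : C, Function.Bijective (fun f : B ⟶ Z => F.map f) :=
    fun B hB Z => mixed_bij F hU12 hV12 hF1 hF2 bij1 hB Z
  intro X Y
  obtain ⟨A, B, hA, hB, a, b, c, hT⟩ := hU01.exists_triangle X
  have hT' := F.map_distinguished _ hT
  constructor
  · -- injectivity
    suffices h : ∀ f : X ⟶ Y, F.map f = 0 → f = 0 by
      intro f g hfg
      simp only at hfg
      rw [← sub_eq_zero]
      apply h
      rw [F.map_sub, hfg, sub_self]
    intro f hf
    have haf : a ≫ f = 0 := by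
      apply (mix0 A hA Y).1
      show F.map (a ≫ f) = F.map 0
      rw [F.map_comp, hf, comp_zero, F.map_zero]
    obtain ⟨g, hg⟩ := Triangle.yoneda_exact₂ _ hT f haf
    replace hg : f = b ≫ g := hg
    have hFg : (F.mapTriangle.obj (Triangle.mk a b c)).mor₂ ≫ F.map g = 0 := by
      show F.map b ≫ F.map g = 0
      erw [← F.map_comp, ← hg, hf]
    obtain ⟨h', hh'⟩ := Triangle.yoneda_exact₃ _ hT' (F.map g) hFg
    obtain ⟨k, hk⟩ := (mix0 _ (hU01.shift_memU 1 A hA) Y).2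
      ((F.commShiftIso (1:ℤ)).hom.app A ≫ h')
    simp only at hk
    have hgk : g = c ≫ k := by
      apply (mix1 B hB Y).1
      show F.map g = F.map (c ≫ k)
      rw [hh', F.map_comp, hk]
      show (F.map c ≫ (F.commShiftIso (1:ℤ)).hom.app A) ≫ h'
        = F.map c ≫ (F.commShiftIso (1:ℤ)).hom.app A ≫ h'
      erw [Category.assoc]
    have hbc : b ≫ c = 0 := comp_distTriang_mor_zero₂₃ _ hT
    rw [hg, hgk, ← Category.assoc, hbc, zero_comp]
  · -- surjectivity
    intro φ
    obtain ⟨α, hα⟩ := (mix0 A hA Y).2 (F.map a ≫ φ)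
    simp only at hα
    have hiTd := inv_rot_of_distTriang _ hT
    have hδα : (Triangle.mk a b c).invRotate.mor₁ ≫ α = 0 := by
      apply (mix1 _ (hU12.shift_memU (-1) B hB) Y).1
      show F.map ((Triangle.mk a b c).invRotate.mor₁ ≫ α) = F.map 0
      have h12 : (Triangle.mk a b c).invRotate.mor₁ ≫ a = 0 :=
        comp_distTriang_mor_zero₁₂ _ hiTd
      erw [F.map_comp, hα, ← Category.assoc, ← F.map_comp, h12, F.map_zero, zero_comp,
        F.map_zero]
    obtain ⟨f₀', hf₀'⟩ := Triangle.yoneda_exact₂ _ hiTd α hδα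
    let f₀ : X ⟶ Y := f₀'
    have hf₀ : α = a ≫ f₀ := hf₀'
    have hsub : (F.mapTriangle.obj (Triangle.mk a b c)).mor₁ ≫ (φ - F.map f₀) = 0 := by
      show F.map a ≫ (φ - F.map f₀) = 0
      rw [Preadditive.comp_sub, ← hα, hf₀]
      show F.map (a ≫ f₀) - F.map a ≫ F.map f₀ = 0
      rw [F.map_comp, sub_self]
    obtain ⟨ψ, hψ⟩ := Triangle.yoneda_exact₂ _ hT' (φ - F.map f₀) hsub
    obtain ⟨g, hg⟩ := (mix1 B hB Y).2 ψ
    simp only at hg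
    refine ⟨f₀ + b ≫ g, ?_⟩
    show F.map (f₀ + b ≫ g) = φ
    rw [F.map_add, F.map_comp, hg]
    have : φ - F.map f₀ = F.map b ≫ ψ := hψ
    rw [← this]
    abel

/-- Essential surjectivity glues along a stable t-structure, given fullness. -/
lemma global_es (F : C ⥤ D) [F.CommShift ℤ] [F.IsTriangulated]
    {U0 U1 : Set C} {V0 V1 : Set D}
    (hU : IsStableTStructure C U0 U1) (hV : IsStableTStructure D V0 V1)
    (hF0 : ∀ X ∈ U0, F.obj X ∈ V0) (hF1 : ∀ X ∈ U1, F.obj X ∈ V1)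
    (es0 : ∀ Z ∈ V0, ∃ X ∈ U0, Nonempty (F.obj X ≅ Z))
    (es1 : ∀ Z ∈ V1, ∃ X ∈ U1, Nonempty (F.obj X ≅ Z))
    (hfull : ∀ {X Y : C} (φ : F.obj X ⟶ F.obj Y), ∃ f : X ⟶ Y, F.map f = φ) :
    ∀ Z : D, ∃ X : C, Nonempty (F.obj X ≅ Z) := by
  intro Z
  obtain ⟨P, Q, hP, hQ, p, q, r, hS⟩ := hV.exists_triangle Z
  obtain ⟨A, hA, ⟨eP⟩⟩ := es0 P hP
  obtain ⟨B, hB, ⟨eQ⟩⟩ := es1 Q hQ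
  obtain ⟨c, hc⟩ := hfull (eQ.hom ≫ r ≫ (shiftFunctor D (1:ℤ)).map eP.inv ≫
    (F.commShiftIso (1:ℤ)).inv.app A)
  obtain ⟨X, a, b, hTX⟩ := distinguished_cocone_triangle₂ c
  have hT' := F.map_distinguished _ hTX
  have comm : (F.mapTriangle.obj (Triangle.mk a b c)).mor₃ ≫
      (shiftFunctor D (1:ℤ)).map eP.hom = eQ.hom ≫ (Triangle.mk p q r).mor₃ := by
    show (F.map c ≫ (F.commShiftIso (1:ℤ)).hom.app A) ≫ (shiftFunctor D (1:ℤ)).map eP.hom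
      = eQ.hom ≫ r
    rw [hc]
    simp [← Functor.map_comp]
  obtain ⟨m, hm₁, hm₂⟩ := complete_distinguished_triangle_morphism₂
    (F.mapTriangle.obj (Triangle.mk a b c)) (Triangle.mk p q r) hT' hS eP.hom eQ.hom comm
  let φ : F.mapTriangle.obj (Triangle.mk a b c) ⟶ Triangle.mk p q r :=
    { hom₁ := eP.hom, hom₂ := m, hom₃ := eQ.hom,
      comm₁ := hm₁, comm₂ := hm₂, comm₃ := comm }
  have : IsIso φ.hom₂ := isIso₂_of_isIso₁₃ φ hT' hS
    (by dsimp [φ]; exact eP.isIso_hom) (by dsimp [φ]; exact eQ.isIso_hom)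
  exact ⟨X, ⟨@asIso _ _ _ _ φ.hom₂ this⟩⟩


/-- Propagation: if `F` restricts to an equivalence on `U0`, it also does on `U2`,
two steps further along the gon. -/
lemma propagate (F : C ⥤ D) [F.CommShift ℤ] [F.IsTriangulated]
    {U0 U1 U2 : Set C} {V0 V1 V2 : Set D}
    (hU01 : IsStableTStructure C U0 U1) (hU12 : IsStableTStructure C U1 U2)
    (hV01 : IsStableTStructure D V0 V1) (hV12 : IsStableTStructure D V1 V2)
    (hF0 : ∀ X ∈ U0, F.obj X ∈ V0) (hF1 : ∀ X ∈ U1, F.obj X ∈ V1)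
    (hF2 : ∀ X ∈ U2, F.obj X ∈ V2)
    (bij0 : ∀ X Y : C, X ∈ U0 → Y ∈ U0 → Function.Bijective (fun f : X ⟶ Y => F.map f))
    (es0 : ∀ Z ∈ V0, ∃ X ∈ U0, Nonempty (F.obj X ≅ Z)) :
    (∀ X Y : C, X ∈ U2 → Y ∈ U2 → Function.Bijective (fun f : X ⟶ Y => F.map f)) ∧
    (∀ Z ∈ V2, ∃ X ∈ U2, Nonempty (F.obj X ≅ Z)) := by
  constructor
  · intro X Y hX hY
    obtain ⟨A, B, hA, hB, a, b, c, hT⟩ := hU01.exists_triangle X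
    have preC : Function.Bijective (fun g : X ⟶ Y => a ≫ g) :=
      precomp_bij (Triangle.mk a b c) hT Y (fun f => hU12.hom_zero hB hY f)
        (fun f => hU12.hom_zero (hU12.shift_memU (-1) _ hB) hY f)
    have hT' := F.map_distinguished _ hT
    have preD : Function.Bijective (fun g : F.obj X ⟶ F.obj Y => F.map a ≫ g) :=
      precomp_bij (F.mapTriangle.obj (Triangle.mk a b c)) hT' (F.obj Y)
        (fun f => hV12.hom_zero (hF1 _ hB) (hF2 _ hY) f)
        (fun f => hV12.hom_zero (hV12.shift_memU (-1) _ (hF1 _ hB)) (hF2 _ hY) f)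
    have mixA : Function.Bijective (fun f : A ⟶ Y => F.map f) :=
      mixed_bij F hU01 hV01 hF0 hF1 bij0 hA Y
    have key : Function.Bijective
        ((fun g : F.obj X ⟶ F.obj Y => F.map a ≫ g) ∘ (fun f : X ⟶ Y => F.map f)) := by
      have he : ((fun g : F.obj X ⟶ F.obj Y => F.map a ≫ g) ∘ (fun f : X ⟶ Y => F.map f))
          = (fun f : A ⟶ Y => F.map f) ∘ (fun g : X ⟶ Y => a ≫ g) := by
        funext f; simp
      rw [he]
      exact mixA.comp preC
    exact bij_comp_cancel preD key
  · intro Z hZ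
    obtain ⟨P, Q, hP, hQ, p, q, r, hS⟩ := hV01.exists_triangle Z
    obtain ⟨A, hA, ⟨e⟩⟩ := es0 P hP
    obtain ⟨E, X, hE, hX, f₁, f₂, f₃, hTA⟩ := hU12.exists_triangle A
    refine ⟨X, hX, ?_⟩
    have hT' := F.map_distinguished _ hTA
    have hrot := rot_of_distTriang _ hT'
    have Φ : ∀ (W : D), W ∈ V2 → Function.Bijective
        (fun g : F.obj X ⟶ W => F.map f₂ ≫ g) := by
      intro W hW
      exact precomp_bij ((F.mapTriangle.obj (Triangle.mk f₁ f₂ f₃)).rotate) hrot W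
        (fun f => hV12.hom_zero (hV12.shift_memU 1 _ (hF1 _ hE)) hW f)
        (fun f => hV12.hom_zero (hV12.shift_memU (-1) _ (hV12.shift_memU 1 _ (hF1 _ hE))) hW f)
    have Ψ : ∀ (W : D), W ∈ V2 → Function.Bijective (fun g : Z ⟶ W => p ≫ g) := fun W hW =>
      precomp_bij (Triangle.mk p q r) hS W (fun f => hV12.hom_zero hQ hW f)
        (fun f => hV12.hom_zero (hV12.shift_memU (-1) _ hQ) hW f)
    have hFX : F.obj X ∈ V2 := hF2 _ hX
    obtain ⟨u, hu⟩ := (Φ Z hZ).2 (e.hom ≫ p)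
    obtain ⟨v, hv⟩ := (Ψ (F.obj X) hFX).2 (e.inv ≫ F.map f₂)
    simp only at hu hv
    have huv : u ≫ v = 𝟙 (F.obj X) := by
      apply (Φ (F.obj X) hFX).1
      show F.map f₂ ≫ u ≫ v = F.map f₂ ≫ 𝟙 _
      rw [Category.comp_id, ← Category.assoc, hu, Category.assoc, hv, ← Category.assoc,
        Iso.hom_inv_id, Category.id_comp]
    have hvu : v ≫ u = 𝟙 Z := by
      apply (Ψ Z hZ).1
      show p ≫ v ≫ u = p ≫ 𝟙 Z
      rw [Category.comp_id, ← Category.assoc, hv, Category.assoc, hu, ← Category.assoc,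
        Iso.inv_hom_id, Category.id_comp]
    exact ⟨⟨u, v, huv, hvu⟩⟩


/-- given `n`-gons of recollements `(U i)` in `C` and `(V i)` in `D`
(indexed cyclically by `ZMod n`) and a triangle functor `F` with `F (U i) ⊆ V i`:
if `n` is odd and `F` restricts to an equivalence on some `U t`, then `F` is an equivalence;
if `n` is even and `F` restricts to equivalences on some `U t` and `U (t+1)`,
then `F` is an equivalence. -/
theorem stmt3 (n : ℕ) (hn : 0 < n) (F : C ⥤ D) [F.CommShift ℤ] [F.IsTriangulated]
    (U : ZMod n → Set C) (V : ZMod n → Set D)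
    (hgonU : ∀ i : ZMod n, IsStableTStructure C (U i) (U (i + 1)))
    (hgonV : ∀ i : ZMod n, IsStableTStructure D (V i) (V (i + 1)))
    (hF : ∀ (i : ZMod n), ∀ X ∈ U i, F.obj X ∈ V i) :
    (Odd n → ∀ t : ZMod n, RestrictsToEquivalence F (U t) (V t) → F.IsEquivalence) ∧
    (Even n → ∀ t : ZMod n, RestrictsToEquivalence F (U t) (V t) →
      RestrictsToEquivalence F (U (t + 1)) (V (t + 1)) → F.IsEquivalence) := by
  haveI : NeZero n := ⟨hn.ne'⟩
  set P : ZMod n → Prop := fun i => RestrictsToEquivalence F (U i) (V i) with hP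
  -- one propagation step
  have step : ∀ i : ZMod n, P i → P (i + 2) := by
    intro i hi
    have h' := propagate F (hgonU i) (hgonU (i + 1)) (hgonV i) (hgonV (i + 1))
      (hF i) (hF (i + 1)) (hF (i + 1 + 1)) hi.1 hi.2
    have e : i + 1 + 1 = i + 2 := by ring
    rw [e] at h'
    exact h'
  have iter : ∀ (i : ZMod n), P i → ∀ k : ℕ, P (i + 2 * (k : ZMod n)) := by
    intro i hi k
    induction k with
    | zero => simpa using hi
    | succ k ih =>
      have e : (i + 2 * ((k + 1 : ℕ) : ZMod n)) = (i + 2 * (k : ZMod n)) + 2 := by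
        push_cast; ring
      rw [e]
      exact step _ ih
  -- from `P` everywhere, `F` is an equivalence
  have conclude : (∀ i : ZMod n, P i) → F.IsEquivalence := by
    intro hall
    have ffbij : ∀ X Y : C, Function.Bijective (fun f : X ⟶ Y => F.map f) :=
      global_bij F (hgonU 0) (hgonU (0 + 1)) (hgonV 0) (hgonV (0 + 1))
        (hF 0) (hF (0 + 1)) (hF (0 + 1 + 1)) (hall 0).1 (hall (0 + 1)).1
    have es : ∀ Z : D, ∃ X : C, Nonempty (F.obj X ≅ Z) :=
      global_es F (hgonU 0) (hgonV 0) (hF 0) (hF (0 + 1)) (hall 0).2 (hall (0 + 1)).2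
        (fun {X Y} φ => (ffbij X Y).2 φ)
    refine { faithful := ⟨fun {X Y} {f g} h => (ffbij X Y).1 h⟩,
             full := ⟨fun {X Y} φ => (ffbij X Y).2 φ⟩,
             essSurj := ⟨fun Z => ?_⟩ }
    obtain ⟨X, ⟨e⟩⟩ := es Z
    exact ⟨X, ⟨e⟩⟩
  constructor
  · -- odd case
    intro hodd t ht
    apply conclude
    intro s
    obtain ⟨l, hl⟩ := hodd
    set m := (s - t).val with hm
    have hms : (m : ZMod n) = s - t := ZMod.natCast_rightInverse _
    rcases Nat.even_or_odd m with ⟨j, hj⟩ | ⟨j, hj⟩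
    · have key := iter t ht j
      have e : t + 2 * ((j : ℕ) : ZMod n) = s := by
        have : ((2 * j : ℕ) : ZMod n) = s - t := by rw [← hms]; congr 1; omega
        push_cast at this
        rw [this]; ring
      rwa [e] at key
    · have key := iter t ht (j + l + 1)
      have e : t + 2 * (((j + l + 1 : ℕ)) : ZMod n) = s := by
        have h1 : ((2 * (j + l + 1) : ℕ) : ZMod n) = ((m + n : ℕ) : ZMod n) := by
          congr 1; omega
        have h2 : ((m + n : ℕ) : ZMod n) = s - t := by
          push_cast [ZMod.natCast_self]
          rw [hms]; ring
        have h3 : (2 * (((j + l + 1 : ℕ)) : ZMod n)) = s - t := by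
          rw [← h2, ← h1]; push_cast; ring
        rw [h3]; ring
      rwa [e] at key
  · -- even case
    intro _ t ht ht1
    apply conclude
    intro s
    set m := (s - t).val with hm
    have hms : (m : ZMod n) = s - t := ZMod.natCast_rightInverse _
    rcases Nat.even_or_odd m with ⟨j, hj⟩ | ⟨j, hj⟩
    · have key := iter t ht j
      have e : t + 2 * ((j : ℕ) : ZMod n) = s := by
        have : ((2 * j : ℕ) : ZMod n) = s - t := by rw [← hms]; congr 1; omega
        push_cast at this
        rw [this]; ring
      rwa [e] at key
    · have key := iter (t + 1) ht1 j
      have e : (t + 1) + 2 * ((j : ℕ) : ZMod n) = s := by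
        have h1 : ((2 * j + 1 : ℕ) : ZMod n) = s - t := by rw [← hms]; congr 1; omega
        push_cast at h1
        have : (2 : ZMod n) * (j : ℕ) = s - t - 1 := by rw [← h1]; ring
        rw [this]; ring
      rwa [e] at key


end PaperIKM
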